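/- Let Ψ : (0,∞) → ℝ be measurable with |Ψ(ρ)| ≤ M for all ρ and Ψ(ρ) = I + O(ρ^β) as ρ → 0 for some β > 0 and I ≠ 0. Then there exists γ ∈ (0,1) such that |∫_4^{Cn} r^{−1} Ψ(r/n) dr| → ∞ as n → ∞, for any fixed C > 0. In fact, the integral equals (I γ + O(M(1−γ))) log n + O(1), which tends to ±∞ whenever M(1−γ) < |I| γ. -/

import Mathlib

open MeasureTheory Filter

theorem stmt10 (Ψ : ℝ → ℝ) (M I β C₀ ρ₀ : ℝ)
    (hmeas : Measurable Ψ) (hβ : 0 < β) (hI : I ≠ 0) (hρ₀ : 0 < ρ₀)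
    (hM : ∀ ρ : ℝ, 0 < ρ → |Ψ ρ| ≤ M)
    (hasym : ∀ ρ : ℝ, 0 < ρ → ρ ≤ ρ₀ → |Ψ ρ - I| ≤ C₀ * ρ ^ β) :
    ∃ γ ∈ Set.Ioo (0 : ℝ) 1, ∀ C : ℝ, 0 < C →
      Tendsto (fun n : ℕ => |∫ r in Set.Ioc (4 : ℝ) (C * n), r⁻¹ * Ψ (r / n)|)
        atTop atTop := by
  have hM0 : 0 ≤ M := le_trans (abs_nonneg _) (hM 1 one_pos)
  have haI : 0 < |I| := abs_pos.mpr hI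
  have hC₀ : 0 ≤ C₀ := by
    have hmp : (0:ℝ) < min ρ₀ 1 := lt_min hρ₀ one_pos
    have h := hasym (min ρ₀ 1) hmp (min_le_left _ _)
    have hp : (0:ℝ) < (min ρ₀ 1) ^ β := Real.rpow_pos_of_pos hmp β
    nlinarith [abs_nonneg (Ψ (min ρ₀ 1) - I)]
  set γ : ℝ := (M + |I|/2)/(M + |I|) with hγdef
  have hden : 0 < M + |I| := by linarith
  have hγ0 : 0 < γ := div_pos (by linarith) hden
  have hγ1 : γ < 1 := by rw [hγdef, div_lt_one hden]; linarith
  have hkey : |I| * γ - M * (1 - γ) = |I| / 2 := by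
    rw [hγdef]; field_simp; ring
  refine ⟨γ, ⟨hγ0, hγ1⟩, ?_⟩
  intro C hC
  set K : ℝ := |I| * Real.log 4 + C₀/β + M * |Real.log C| with hK
  have hlog : Tendsto (fun n : ℕ => Real.log n) atTop atTop :=
    Real.tendsto_log_atTop.comp tendsto_natCast_atTop_atTop
  have hlower : Tendsto (fun n : ℕ => |I|/2 * Real.log n - K) atTop atTop := by
    simpa [sub_eq_add_neg] using
      tendsto_atTop_add_const_right atTop (-K) (hlog.const_mul_atTop (by positivity))
  have hev1 : ∀ᶠ n : ℕ in atTop, (1:ℝ) ≤ (n:ℝ) := by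
    filter_upwards [eventually_ge_atTop 1] with n hn
    exact_mod_cast hn
  have hTt : Tendsto (fun n : ℕ => (n:ℝ) ^ γ) atTop atTop :=
    (tendsto_rpow_atTop hγ0).comp tendsto_natCast_atTop_atTop
  have hev2 : ∀ᶠ n : ℕ in atTop, (4:ℝ) ≤ (n:ℝ) ^ γ := hTt.eventually_ge_atTop 4
  have hsm : Tendsto (fun n : ℕ => (n:ℝ) ^ (γ - 1)) atTop (nhds 0) := by
    have h := (tendsto_rpow_neg_atTop (y := 1 - γ) (by linarith)).comp
      tendsto_natCast_atTop_atTop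
    simpa [Function.comp_def, neg_sub] using h
  have hev3 : ∀ᶠ n : ℕ in atTop, (n:ℝ) ^ (γ-1) < min ρ₀ C :=
    hsm.eventually_lt_const (lt_min hρ₀ hC)
  apply tendsto_atTop_mono' atTop _ hlower
  filter_upwards [hev1, hev2, hev3] with n hn1 hn4 hnsm
  set N : ℝ := (n:ℝ) with hNdef
  have hN0 : (0:ℝ) < N := lt_of_lt_of_le one_pos hn1
  set T : ℝ := N ^ γ with hTdef
  have hT0 : (0:ℝ) < T := Real.rpow_pos_of_pos hN0 γ
  have hTsplit : T = N ^ (γ-1) * N := by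
    rw [hTdef, ← Real.rpow_add_one (ne_of_gt hN0) (γ-1)]
    congr 1
    ring
  have hTCN : T ≤ C * N := by
    have h1 : N ^ (γ-1) < C := lt_of_lt_of_le hnsm (min_le_right _ _)
    rw [hTsplit]; nlinarith
  have hTρ : T / N ≤ ρ₀ := by
    have h1 : T / N = N ^ (γ-1) := by rw [hTsplit]; field_simp
    rw [h1]; exact le_of_lt (lt_of_lt_of_le hnsm (min_le_left _ _))
  have hTN : T ≤ N := by
    calc T = N ^ γ := hTdef
      _ ≤ N ^ (1:ℝ) := Real.rpow_le_rpow_of_exponent_le hn1 (le_of_lt hγ1)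
      _ = N := Real.rpow_one N
  have h4T : (4:ℝ) ≤ T := hn4
  have h4CN : (4:ℝ) ≤ C * N := h4T.trans hTCN
  have h40 : (0:ℝ) < 4 := by norm_num
  -- integrability
  have hmf : Measurable fun r : ℝ => r⁻¹ * Ψ (r / N) :=
    measurable_inv.mul (hmeas.comp (measurable_id.div_const N))
  have hintOn : ∀ a b : ℝ, 0 < a →
      IntegrableOn (fun r : ℝ => r⁻¹ * Ψ (r / N)) (Set.Ioc a b) := by
    intro a b ha
    apply Measure.integrableOn_of_bounded (M := a⁻¹ * M) measure_Ioc_lt_top.ne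
      hmf.aestronglyMeasurable
    filter_upwards [ae_restrict_mem measurableSet_Ioc] with r hr
    have hr0 : 0 < r := ha.trans hr.1
    have h2 : |Ψ (r/N)| ≤ M := hM _ (div_pos hr0 hN0)
    have h3 : r⁻¹ ≤ a⁻¹ := inv_anti₀ ha (le_of_lt hr.1)
    calc ‖r⁻¹ * Ψ (r/N)‖ = |r⁻¹| * |Ψ (r/N)| := abs_mul _ _
      _ ≤ a⁻¹ * M := by
          rw [abs_of_pos (inv_pos.mpr hr0)]
          exact mul_le_mul h3 h2 (abs_nonneg _) (by positivity)
  have hII : ∀ a b : ℝ, 0 < a → a ≤ b →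
      IntervalIntegrable (fun r : ℝ => r⁻¹ * Ψ (r / N)) volume a b :=
    fun a b ha hab => (intervalIntegrable_iff_integrableOn_Ioc_of_le hab).mpr (hintOn a b ha)
  set A := ∫ r in (4:ℝ)..T, r⁻¹ * Ψ (r / N) with hAdef
  set B := ∫ r in T..(C*N), r⁻¹ * Ψ (r / N) with hBdef
  have hsplit : ∫ r in Set.Ioc (4:ℝ) (C*N), r⁻¹ * Ψ (r / N) = A + B := by
    rw [hAdef, hBdef,
      intervalIntegral.integral_add_adjacent_intervals (hII 4 T h40 h4T)
        (hII T (C*N) hT0 hTCN),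
      intervalIntegral.integral_of_le h4CN]
  have h0uIcc : (0:ℝ) ∉ Set.uIcc (4:ℝ) T := by
    rw [Set.uIcc_of_le h4T]
    rintro ⟨h1, -⟩; norm_num at h1
  have h0uIcc' : (0:ℝ) ∉ Set.uIcc T (C*N) := by
    rw [Set.uIcc_of_le hTCN]
    rintro ⟨h1, -⟩; linarith
  have hinvInt : IntervalIntegrable (fun r : ℝ => r⁻¹) volume 4 T :=
    intervalIntegral.intervalIntegrable_inv
      (fun x hx => by rintro rfl; exact h0uIcc hx) continuousOn_id
  have hinvInt' : IntervalIntegrable (fun r : ℝ => r⁻¹) volume T (C*N) :=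
    intervalIntegral.intervalIntegrable_inv
      (fun x hx => by rintro rfl; exact h0uIcc' hx) continuousOn_id
  have hlogT4 : Real.log (T/4) = γ * Real.log N - Real.log 4 := by
    rw [Real.log_div (ne_of_gt hT0) (by norm_num), hTdef, Real.log_rpow hN0]
  have hlogT4nn : 0 ≤ Real.log (T/4) :=
    Real.log_nonneg ((one_le_div h40).mpr h4T)
  have hlogN0 : 0 ≤ Real.log N := Real.log_nonneg hn1
  -- estimate A
  have hAeq : ∫ r in (4:ℝ)..T, r⁻¹ * (Ψ (r / N) - I) = A - Real.log (T/4) * I := by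
    have heq : (fun r : ℝ => r⁻¹ * (Ψ (r / N) - I))
        = fun r => r⁻¹ * Ψ (r / N) - r⁻¹ * I := by funext r; ring
    rw [heq, intervalIntegral.integral_sub (hII 4 T h40 h4T) (hinvInt.mul_const I),
      intervalIntegral.integral_mul_const, integral_inv h0uIcc]
  have hEbound : |∫ r in (4:ℝ)..T, r⁻¹ * (Ψ (r / N) - I)| ≤ C₀ / β := by
    have hg : IntervalIntegrable (fun r : ℝ => C₀ / N ^ β * r ^ (β - 1)) volume 4 T :=
      (intervalIntegral.intervalIntegrable_rpow (Or.inr h0uIcc)).const_mul _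
    have hb : ∀ᵐ r ∂(volume.restrict (Set.uIoc (4:ℝ) T)),
        ‖r⁻¹ * (Ψ (r / N) - I)‖ ≤ C₀ / N ^ β * r ^ (β - 1) := by
      rw [Set.uIoc_of_le h4T]
      filter_upwards [ae_restrict_mem measurableSet_Ioc] with r hr
      have hr0 : (0:ℝ) < r := lt_trans h40 hr.1
      have hrN : r / N ≤ ρ₀ := le_trans (by gcongr; exact hr.2) hTρ
      have h1 : |Ψ (r / N) - I| ≤ C₀ * (r / N) ^ β := hasym _ (div_pos hr0 hN0) hrN
      have h2 : (r / N) ^ β = r ^ β / N ^ β := Real.div_rpow hr0.le hN0.le β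
      have h3 : r ^ (β - 1) = r ^ β / r := by
        rw [Real.rpow_sub hr0, Real.rpow_one]
      calc ‖r⁻¹ * (Ψ (r / N) - I)‖ = r⁻¹ * |Ψ (r / N) - I| := by
            rw [Real.norm_eq_abs, abs_mul, abs_of_pos (inv_pos.mpr hr0)]
        _ ≤ r⁻¹ * (C₀ * (r / N) ^ β) := by
            exact mul_le_mul_of_nonneg_left h1 (inv_nonneg.mpr hr0.le)
        _ = C₀ / N ^ β * r ^ (β - 1) := by
            rw [h2, h3]; ring
    have hNβ : (0:ℝ) < N ^ β := Real.rpow_pos_of_pos hN0 β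
    have hTβ4 : (4:ℝ) ^ β ≤ T ^ β := Real.rpow_le_rpow (by norm_num) h4T hβ.le
    have hTβN : T ^ β ≤ N ^ β := Real.rpow_le_rpow hT0.le hTN hβ.le
    have h4βnn : (0:ℝ) ≤ (4:ℝ) ^ β := Real.rpow_nonneg (by norm_num) β
    calc |∫ r in (4:ℝ)..T, r⁻¹ * (Ψ (r / N) - I)|
        ≤ |∫ r in (4:ℝ)..T, C₀ / N ^ β * r ^ (β - 1)| :=
          intervalIntegral.norm_integral_le_abs_of_norm_le hb hg
      _ = |C₀ / N ^ β * ((T ^ β - 4 ^ β) / β)| := by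
          rw [intervalIntegral.integral_const_mul, integral_rpow (Or.inl (by linarith)),
            show β - 1 + 1 = β by ring]
      _ = C₀ / N ^ β * ((T ^ β - 4 ^ β) / β) :=
          abs_of_nonneg (mul_nonneg (div_nonneg hC₀ hNβ.le)
            (div_nonneg (by linarith) hβ.le))
      _ ≤ C₀ / N ^ β * (N ^ β / β) :=
          mul_le_mul_of_nonneg_left ((div_le_div_iff_of_pos_right hβ).mpr (by linarith))
            (div_nonneg hC₀ hNβ.le)
      _ = C₀ / β := by field_simp
  have hAlow : |I| * (γ * Real.log N) - |I| * Real.log 4 - C₀/β ≤ |A| := by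
    have h1 : |Real.log (T/4) * I| = Real.log (T/4) * |I| := by
      rw [abs_mul, abs_of_nonneg hlogT4nn]
    have h2 : |A - Real.log (T/4) * I| ≤ C₀/β := hAeq ▸ hEbound
    have h3 := abs_sub_abs_le_abs_sub (Real.log (T/4) * I) A
    rw [abs_sub_comm] at h3
    have h4 : Real.log (T/4) * |I| = |I| * (γ * Real.log N) - |I| * Real.log 4 := by
      rw [hlogT4]; ring
    linarith [h4 ▸ h1 ▸ h3]
  -- estimate B
  have hBbound : |B| ≤ M * (|Real.log C| + (1-γ) * Real.log N) := by
    have hgB : IntervalIntegrable (fun r : ℝ => M * r⁻¹) volume T (C*N) :=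
      hinvInt'.const_mul M
    have hb : ∀ᵐ r ∂(volume.restrict (Set.uIoc T (C*N))),
        ‖r⁻¹ * Ψ (r / N)‖ ≤ M * r⁻¹ := by
      rw [Set.uIoc_of_le hTCN]
      filter_upwards [ae_restrict_mem measurableSet_Ioc] with r hr
      have hr0 : (0:ℝ) < r := lt_trans hT0 hr.1
      calc ‖r⁻¹ * Ψ (r / N)‖ = r⁻¹ * |Ψ (r / N)| := by
            rw [Real.norm_eq_abs, abs_mul, abs_of_pos (inv_pos.mpr hr0)]
        _ ≤ r⁻¹ * M := mul_le_mul_of_nonneg_left (hM _ (div_pos hr0 hN0))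
            (inv_nonneg.mpr hr0.le)
        _ = M * r⁻¹ := mul_comm _ _
    have hval : ∫ r in T..(C*N), M * r⁻¹ = M * (Real.log C + (1-γ)*Real.log N) := by
      rw [intervalIntegral.integral_const_mul, integral_inv h0uIcc']
      congr 1
      rw [Real.log_div (by positivity) (ne_of_gt hT0),
        Real.log_mul (ne_of_gt hC) (ne_of_gt hN0), hTdef, Real.log_rpow hN0]
      ring
    have h5 : |B| ≤ |M * (Real.log C + (1-γ)*Real.log N)| := by
      rw [← hval]
      exact intervalIntegral.norm_integral_le_abs_of_norm_le hb hgB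
    have h6 : |M * (Real.log C + (1-γ)*Real.log N)| ≤ M * (|Real.log C| + (1-γ) * Real.log N) := by
      rw [abs_mul, abs_of_nonneg hM0]
      apply mul_le_mul_of_nonneg_left _ hM0
      calc |Real.log C + (1-γ)*Real.log N| ≤ |Real.log C| + |(1-γ)*Real.log N| := abs_add_le _ _
        _ = |Real.log C| + (1-γ)*Real.log N := by
            rw [abs_of_nonneg (mul_nonneg (by linarith) hlogN0)]
    linarith
  -- assemble
  have htri : |A| ≤ |A + B| + |B| := by
    have h := abs_add_le (A + B) (-B)
    rw [add_neg_cancel_right, abs_neg] at h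
    exact h
  have hkey2 : |I| * (γ * Real.log N) - M * ((1-γ) * Real.log N) = |I|/2 * Real.log N := by
    rw [← hkey]; ring
  rw [hsplit]
  have : Real.log (n:ℝ) = Real.log N := rfl
  rw [hK]
  linarith
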